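/- Main Lemma: Let α, β be irrational with convergent denominators (q_ν), (r_μ) and errors ξ_ν = |q_ν α − p_ν|, η_μ = |r_μ β − s_μ|. Suppose for some indices ν, μ and integer d ≥ 1 that ξ_ν ≤ η_μ, ξ_{ν+1} ≤ η_{μ+d−1}, q_{ν+1} ≤ r_{μ+1}, and q_{ν+2} = r_{μ+d}. Then all three inequalities are equalities, d = 2, and the reversed quotients satisfy α*_{ν+2} = β*_{μ+2} (i.e. q_{ν+1} = r_{μ+1} and q_{ν+2} = r_{μ+2}). -/

import Mathlib

/-- Complete quotients of the continued fraction of `α`: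
`cq α 0 = α`, `cq α (n+1) = 1 / fract (cq α n)`. -/
noncomputable def cq (α : ℝ) : ℕ → ℝ
  | 0 => α
  | n + 1 => 1 / Int.fract (cq α n)

/-- Partial quotients `a_n` of the continued fraction of `α`. -/
noncomputable def pq (α : ℝ) (n : ℕ) : ℤ := ⌊cq α n⌋

/-- Convergent numerators `p_n`. -/
noncomputable def cnum (α : ℝ) : ℕ → ℤ
  | 0 => pq α 0
  | 1 => pq α 1 * pq α 0 + 1
  | n + 2 => pq α (n + 2) * cnum α (n + 1) + cnum α n

/-- Convergent denominators `q_n`. -/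
noncomputable def cden (α : ℝ) : ℕ → ℤ
  | 0 => 1
  | 1 => pq α 1
  | n + 2 => pq α (n + 2) * cden α (n + 1) + cden α n

/-- Approximation errors `ξ_n = |q_n α - p_n|`. -/
noncomputable def xi (α : ℝ) (n : ℕ) : ℝ := |(cden α n : ℝ) * α - (cnum α n : ℝ)|

/-- Value of the finite continued fraction `[c₁; c₂, ..., c_k]` (empty list gives `0`). -/
noncomputable def cfval : List ℝ → ℝ
  | [] => 0
  | c :: l => c + 1 / cfval l

/-- Reversed quotient `α*_n = [0; a_n, a_{n-1}, ..., a_1]`. -/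
noncomputable def revq (α : ℝ) (n : ℕ) : ℝ :=
  1 / cfval ((List.range n).map fun i => (pq α (n - i) : ℝ))

/-- Distance of a real number to the nearest integer. -/
noncomputable def distZ (x : ℝ) : ℝ := |x - round x|

/-- Irrationality measure function `ψ_α(t) = min_{q ∈ ℤ₊, q ≤ t} ‖qα‖`. -/
noncomputable def psi (α : ℝ) (t : ℝ) : ℝ :=
  sInf {v : ℝ | ∃ q : ℕ, 0 < q ∧ (q : ℝ) ≤ t ∧ v = distZ ((q : ℝ) * α)}

/-- Continuant `⟨c₁, ..., c_k⟩` (empty continuant equals `1`). -/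
def contnt : List ℤ → ℤ
  | [] => 1
  | [c] => c
  | c :: c' :: l => c * contnt (c' :: l) + contnt l

/-- The `k`-index: the number of orderings (permutations) of the `ψ`-functions
that occur for arbitrarily large `t`. -/
noncomputable def kIndex {n : ℕ} (α : Fin n → ℝ) : ℕ :=
  Set.ncard {σ : Equiv.Perm (Fin n) |
    ∀ T : ℝ, ∃ t : ℝ, T < t ∧ ∀ i j : Fin n, i < j →
      psi (α (σ j)) t < psi (α (σ i)) t}

namespace CFaux

lemma irrational_cq (α : ℝ) (hα : Irrational α) : ∀ n, Irrational (cq α n) := by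
  intro n
  induction n with
  | zero => exact hα
  | succ n ih =>
    have hf : Irrational (Int.fract (cq α n)) := by unfold Int.fract; exact ih.sub_intCast _
    rw [cq, one_div]
    exact hf.inv

lemma fract_cq_pos (α : ℝ) (hα : Irrational α) (n : ℕ) : 0 < Int.fract (cq α n) := by
  have h : Irrational (Int.fract (cq α n)) := by
    unfold Int.fract; exact (irrational_cq α hα n).sub_intCast _
  exact lt_of_le_of_ne (Int.fract_nonneg _) (Ne.symm h.ne_zero)

lemma one_lt_cq (α : ℝ) (hα : Irrational α) (n : ℕ) : 1 < cq α (n + 1) := by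
  rw [cq]
  rw [lt_div_iff₀ (fract_cq_pos α hα n), one_mul]
  exact Int.fract_lt_one _

lemma pq_pos (α : ℝ) (hα : Irrational α) (n : ℕ) : 1 ≤ pq α (n + 1) := by
  unfold pq
  exact Int.le_floor.mpr (by exact_mod_cast (one_lt_cq α hα n).le)

lemma cden_pos (α : ℝ) (hα : Irrational α) : ∀ n, 1 ≤ cden α n := by
  intro n
  induction n using Nat.strong_induction_on with
  | _ n ih =>
    match n with
    | 0 => simp [cden]
    | 1 => exact pq_pos α hα 0
    | (m + 2) =>
      rw [cden]
      have h1 := ih (m+1) (by omega)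
      have h2 := ih m (by omega)
      nlinarith [pq_pos α hα (m+1)]

lemma cden_le_succ (α : ℝ) (hα : Irrational α) : ∀ n, cden α n ≤ cden α (n + 1) := by
  intro n
  match n with
  | 0 => simpa [cden] using pq_pos α hα 0
  | (m + 1) =>
    rw [cden]
    nlinarith [pq_pos α hα (m+1), cden_pos α hα m, cden_pos α hα (m+1)]

lemma cden_mono (α : ℝ) (hα : Irrational α) {m n : ℕ} (h : m ≤ n) :
    cden α m ≤ cden α n := by
  induction n with
  | zero => simp_all
  | succ n ih =>
    rcases Nat.lt_or_ge m (n+1) with h' | h'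
    · exact le_trans (ih (by omega)) (cden_le_succ α hα n)
    · have : m = n + 1 := by omega
      simp [this]

/-- signed error -/
noncomputable def Dv (α : ℝ) (n : ℕ) : ℝ := (cden α n : ℝ) * α - (cnum α n : ℝ)

lemma xi_eq_abs_Dv (α : ℝ) (n : ℕ) : xi α n = |Dv α n| := rfl

lemma cq_zero (α : ℝ) : cq α 0 = α := rfl

lemma Dv_zero (α : ℝ) : Dv α 0 = Int.fract α := by
  have h1 : cden α 0 = 1 := rfl
  have h2 : cnum α 0 = ⌊α⌋ := by
    show pq α 0 = ⌊α⌋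
    unfold pq; rw [cq_zero]
  rw [Dv, h1, h2]
  push_cast
  rw [one_mul, Int.self_sub_floor]

lemma Dv_rec (α : ℝ) (n : ℕ) :
    Dv α (n + 2) = (pq α (n + 2) : ℝ) * Dv α (n + 1) + Dv α n := by
  simp only [Dv, cden, cnum]
  push_cast
  ring

lemma Dv_succ (α : ℝ) (hα : Irrational α) :
    ∀ n, Dv α (n + 1) = -Int.fract (cq α (n + 1)) * Dv α n := by
  intro n
  induction n with
  | zero =>
    have hf0 : (0:ℝ) < Int.fract α := fract_cq_pos α hα 0
    have hcq1 : cq α 1 = 1 / Int.fract α := by rw [cq]; rfl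
    have hfr : Int.fract (cq α 1) = 1 / Int.fract α - (pq α 1 : ℝ) := by
      rw [Int.fract, hcq1]; rfl
    have : Dv α 1 = (pq α 1 : ℝ) * Int.fract α - 1 := by
      have h2 : (cnum α 1 : ℝ) = (pq α 1 : ℝ) * (⌊α⌋ : ℝ) + 1 := by
        have : cnum α 1 = pq α 1 * pq α 0 + 1 := rfl
        rw [this, show pq α 0 = ⌊α⌋ from by unfold pq; rw [cq_zero]]
        push_cast; ring
      have h3 : (cden α 1 : ℝ) = (pq α 1 : ℝ) := by norm_cast
      rw [Dv, h3, h2, Int.fract]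
      ring
    rw [this, hfr, Dv_zero]
    field_simp
    ring
  | succ n ih =>
    have hfn : (0:ℝ) < Int.fract (cq α (n+1)) := fract_cq_pos α hα (n+1)
    have hcq : cq α (n + 2) = 1 / Int.fract (cq α (n+1)) := by rw [cq]
    have hDv : Dv α n = -(1 / Int.fract (cq α (n+1))) * Dv α (n+1) := by
      rw [ih]; field_simp
    rw [Dv_rec, hDv]
    have hfr : Int.fract (cq α (n+2)) = cq α (n+2) - (pq α (n+2) : ℝ) := by
      rw [Int.fract]; rfl
    rw [hfr, hcq]
    ring


lemma xi_succ (α : ℝ) (hα : Irrational α) (n : ℕ) :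
    xi α (n + 1) = Int.fract (cq α (n + 1)) * xi α n := by
  rw [xi_eq_abs_Dv, xi_eq_abs_Dv, Dv_succ α hα n, abs_mul, abs_neg,
    abs_of_pos (fract_cq_pos α hα (n+1))]

lemma xi_pos (α : ℝ) (hα : Irrational α) : ∀ n, 0 < xi α n := by
  intro n
  induction n with
  | zero =>
    have h := fract_cq_pos α hα 0
    rw [cq_zero] at h
    rw [xi_eq_abs_Dv, Dv_zero, abs_of_pos h]
    exact h
  | succ n ih =>
    rw [xi_succ α hα n]
    exact mul_pos (fract_cq_pos α hα (n+1)) ih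

lemma xi_lt (α : ℝ) (hα : Irrational α) (n : ℕ) : xi α (n + 1) < xi α n := by
  rw [xi_succ α hα n]
  nlinarith [xi_pos α hα n, fract_cq_pos α hα (n+1), Int.fract_lt_one (cq α (n+1))]

lemma sign_Dv (α : ℝ) (hα : Irrational α) : ∀ n, (-1 : ℝ) ^ n * Dv α n = xi α n := by
  intro n
  induction n with
  | zero =>
    have h := fract_cq_pos α hα 0
    rw [cq_zero] at h
    rw [pow_zero, one_mul, xi_eq_abs_Dv, Dv_zero, abs_of_pos h]
  | succ n ih =>
    rw [Dv_succ α hα n, xi_succ α hα n, ← ih]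
    ring

lemma det_rec (α : ℝ) : ∀ n, cden α n * cnum α (n + 1) - cden α (n + 1) * cnum α n = (-1) ^ n := by
  intro n
  induction n with
  | zero =>
    have h0 : cden α 0 = 1 := rfl
    have h1 : cden α 1 = pq α 1 := rfl
    have h2 : cnum α 0 = pq α 0 := rfl
    have h3 : cnum α 1 = pq α 1 * pq α 0 + 1 := rfl
    rw [h0, h1, h2, h3]; ring
  | succ n ih =>
    have hq : cden α (n + 2) = pq α (n + 2) * cden α (n + 1) + cden α n := rfl
    have hp : cnum α (n + 2) = pq α (n + 2) * cnum α (n + 1) + cnum α n := rfl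
    rw [hq, hp, pow_succ]
    nlinarith [ih]

lemma xi_identity (α : ℝ) (hα : Irrational α) (n : ℕ) :
    xi α n * (cden α (n + 1) : ℝ) + xi α (n + 1) * (cden α n : ℝ) = 1 := by
  have hdet : ((cden α n : ℝ) * (cnum α (n+1) : ℝ) - (cden α (n+1) : ℝ) * (cnum α n : ℝ)) = (-1:ℝ) ^ n := by
    have := det_rec α n
    have : ((cden α n * cnum α (n + 1) - cden α (n + 1) * cnum α n : ℤ) : ℝ) = (((-1 : ℤ)^n : ℤ) : ℝ) := by
      exact_mod_cast congrArg (fun z : ℤ => (z : ℝ)) this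
    push_cast at this
    linarith [this]
  have hs1 := sign_Dv α hα n
  have hs2 := sign_Dv α hα (n+1)
  have hDr : (cden α (n+1) : ℝ) * Dv α n - (cden α n : ℝ) * Dv α (n + 1) = (-1:ℝ)^n := by
    rw [Dv, Dv]; ring_nf; ring_nf at hdet; linarith [hdet]
  have hpow : ((-1:ℝ)^n) * ((-1:ℝ)^n) = 1 := by
    rw [← pow_add]
    simp [pow_mul]
  have h2 : xi α (n+1) = (-1:ℝ)^n * (-(Dv α (n+1))) := by
    rw [← hs2, pow_succ]; ring
  rw [← hs1, h2]
  linear_combination ((-1:ℝ)^n) * hDr + hpow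

lemma xi_rec (α : ℝ) (hα : Irrational α) (n : ℕ) :
    xi α n = (pq α (n + 2) : ℝ) * xi α (n + 1) + xi α (n + 2) := by
  have h := Dv_rec α n
  have hs0 := sign_Dv α hα n
  have hs1 := sign_Dv α hα (n+1)
  have hs2 := sign_Dv α hα (n+2)
  have p1 : (-1:ℝ)^(n+1) = -(-1:ℝ)^n := by ring
  have p2 : (-1:ℝ)^(n+2) = (-1:ℝ)^n := by ring
  rw [← hs0, ← hs1, ← hs2, p1, p2, h]
  ring



lemma cfval_list (α : ℝ) (hα : Irrational α) :
    ∀ n, cfval ((List.range (n+1)).map fun i => (pq α (n + 1 - i) : ℝ))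
      = (cden α (n+1) : ℝ) / (cden α n : ℝ) := by
  intro n
  induction n with
  | zero =>
    have : List.range 1 = [0] := rfl
    rw [this]
    simp only [List.map_cons, List.map_nil]
    rw [cfval, cfval]
    norm_num
    rw [show cden α 1 = pq α 1 from rfl, show cden α 0 = 1 from rfl]
    norm_num
  | succ n ih =>
    have hsplit : (List.range (n+2)).map (fun i => (pq α (n + 2 - i) : ℝ))
        = (pq α (n+2) : ℝ) :: (List.range (n+1)).map (fun i => (pq α (n + 1 - i) : ℝ)) := by
      have hfun : ((fun i => (pq α (n + 2 - i) : ℝ)) ∘ Nat.succ) = (fun i => (pq α (n + 1 - i) : ℝ)) := by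
        funext i
        have h : n + 2 - (i + 1) = n + 1 - i := by omega
        simp [Function.comp, h]
      rw [List.range_succ_eq_map]
      simp only [List.map_cons, List.map_map, hfun]
      norm_num
    rw [hsplit, cfval, ih]
    have hq0 : (0:ℝ) < (cden α n : ℝ) := by exact_mod_cast cden_pos α hα n
    have hq1 : (0:ℝ) < (cden α (n+1) : ℝ) := by exact_mod_cast cden_pos α hα (n+1)
    have hrec : (cden α (n+2) : ℝ) = (pq α (n+2) : ℝ) * (cden α (n+1) : ℝ) + (cden α n : ℝ) := by
      have : cden α (n+2) = pq α (n+2) * cden α (n+1) + cden α n := rfl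
      exact_mod_cast congrArg (fun z : ℤ => (z : ℝ)) this
    rw [hrec]
    field_simp

lemma revq_eq (α : ℝ) (hα : Irrational α) (n : ℕ) :
    revq α (n+1) = (cden α n : ℝ) / (cden α (n+1) : ℝ) := by
  rw [revq, cfval_list α hα n]
  have hq0 : (0:ℝ) < (cden α n : ℝ) := by exact_mod_cast cden_pos α hα n
  have hq1 : (0:ℝ) < (cden α (n+1) : ℝ) := by exact_mod_cast cden_pos α hα (n+1)
  rw [one_div_div]


def rec2 (c : ℕ → ℤ) (s : ℤ × ℤ) : ℕ → ℤ × ℤ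
  | 0 => s
  | m + 1 => ((rec2 c s m).2, c m * (rec2 c s m).2 + (rec2 c s m).1)

lemma rec2_zero (c : ℕ → ℤ) (s : ℤ × ℤ) : rec2 c s 0 = s := rfl

lemma rec2_one (c : ℕ → ℤ) (s : ℤ × ℤ) : rec2 c s 1 = (s.2, c 0 * s.2 + s.1) := rfl

lemma rec2_succ_1 (c : ℕ → ℤ) (s : ℤ × ℤ) (m : ℕ) :
    (rec2 c s (m+1)).1 = (rec2 c s m).2 := rfl

lemma rec2_succ_2 (c : ℕ → ℤ) (s : ℤ × ℤ) (m : ℕ) :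
    (rec2 c s (m+1)).2 = c m * (rec2 c s m).2 + (rec2 c s m).1 := rfl

section Chain

variable (β : ℝ) (hβ : Irrational β) (μ d : ℕ)

local notation "c" => fun m => pq β (μ + d - m)

lemma c_pos (hβ : Irrational β) (m : ℕ) (hm : m ≤ d - 1) (hd : 2 ≤ d) : 1 ≤ pq β (μ + d - m) := by
  have h : μ + d - m = (μ + d - m - 1) + 1 := by omega
  rw [h]
  exact pq_pos β hβ _

lemma chainA (hβ : Irrational β) (hd : 2 ≤ d) :
    ∀ m, m ≤ d - 1 →
      (xi β (μ + (d - 1 - m)) = ((rec2 c (0,1) m).2 : ℝ) * xi β (μ + (d-1))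
          + ((rec2 c (1,0) m).2 : ℝ) * xi β (μ + d)
        ∧ xi β (μ + (d - m)) = ((rec2 c (0,1) m).1 : ℝ) * xi β (μ + (d-1))
          + ((rec2 c (1,0) m).1 : ℝ) * xi β (μ + d)) := by
  intro m
  induction m with
  | zero =>
    intro _
    rw [rec2_zero, rec2_zero]
    constructor
    · norm_num
    · have h : d - 0 = d := by omega
      rw [h]
      norm_num
  | succ m ih =>
    intro hm
    obtain ⟨ih1, ih2⟩ := ih (by omega)
    have hrec := xi_rec β hβ (μ + (d - 2 - m))
    have e1 : μ + (d - 2 - m) + 1 = μ + (d - 1 - m) := by omega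
    have e2 : μ + (d - 2 - m) + 2 = μ + (d - m) := by omega
    have e3 : μ + (d - 1 - (m+1)) = μ + (d - 2 - m) := by omega
    have e4 : μ + (d - (m+1)) = μ + (d - 1 - m) := by omega
    have ec : pq β (μ + (d - m)) = pq β (μ + d - m) := by congr 1; omega
    constructor
    · rw [e3, hrec, e1, e2, ih1, ih2, ec, rec2_succ_2, rec2_succ_2]
      push_cast
      ring
    · rw [e4, rec2_succ_1, rec2_succ_1]
      exact ih1

lemma chainB (hβ : Irrational β) (hd : 2 ≤ d) :
    ∀ m, m ≤ d - 1 →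
      cden β (μ + d) = (rec2 c (0,1) m).2 * cden β (μ + (d - m))
        + (rec2 c (0,1) m).1 * cden β (μ + (d - m - 1)) := by
  intro m
  induction m with
  | zero =>
    intro _
    rw [rec2_zero]
    have h : d - 0 = d := by omega
    rw [h]
    ring
  | succ m ih =>
    intro hm
    have ih' := ih (by omega)
    have hrec : cden β (μ + (d - m)) = pq β (μ + d - m) * cden β (μ + (d - (m+1)))
        + cden β (μ + (d - (m+1) - 1)) := by
      have e2 : μ + (d - m) = (μ + (d - m - 2)) + 2 := by omega
      have e1 : μ + (d - (m+1)) = (μ + (d - m - 2)) + 1 := by omega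
      have e0 : μ + (d - (m+1) - 1) = μ + (d - m - 2) := by omega
      have ec : pq β (μ + d - m) = pq β ((μ + (d - m - 2)) + 2) := by congr 1; omega
      rw [e2, e1, e0, ec]
      rfl
    have e5 : μ + (d - m - 1) = μ + (d - (m+1)) := by omega
    rw [ih', hrec, e5, rec2_succ_2, rec2_succ_1]
    ring

lemma chainU (hβ : Irrational β) (hd : 2 ≤ d) :
    ∀ m, m ≤ d - 1 → 0 ≤ (rec2 c (0,1) m).1 ∧ 1 ≤ (rec2 c (0,1) m).2 := by
  intro m
  induction m with
  | zero => intro _; rw [rec2_zero]; omega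
  | succ m ih =>
    intro hm
    obtain ⟨h1, h2⟩ := ih (by omega)
    have hc := c_pos β μ d hβ m (by omega) hd
    rw [rec2_succ_1, rec2_succ_2]
    constructor
    · omega
    · nlinarith

lemma chainV (hβ : Irrational β) (hd : 2 ≤ d) :
    ∀ m, m ≤ d - 1 → (0 ≤ (rec2 c (1,0) m).1 ∧ 0 ≤ (rec2 c (1,0) m).2
      ∧ (1 ≤ m → 1 ≤ (rec2 c (1,0) m).2)) := by
  intro m
  induction m with
  | zero => intro _; rw [rec2_zero]; omega
  | succ m ih =>
    intro hm
    obtain ⟨h1, h2, h3⟩ := ih (by omega)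
    have hc := c_pos β μ d hβ m (by omega) hd
    rw [rec2_succ_1, rec2_succ_2]
    refine ⟨h2, by nlinarith, ?_⟩
    intro _
    rcases Nat.eq_zero_or_pos m with hm0 | hm0
    · subst hm0
      rw [rec2_zero]
      simp
    · have := h3 hm0
      nlinarith

end Chain

end CFaux

set_option maxHeartbeats 1000000 in
theorem stmt7 (α β : ℝ) (hα : Irrational α) (hβ : Irrational β)
    (ν μ d : ℕ) (hd : 1 ≤ d)
    (h1 : xi α ν ≤ xi β μ)
    (h2 : xi α (ν + 1) ≤ xi β (μ + d - 1))
    (h3 : cden α (ν + 1) ≤ cden β (μ + 1))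
    (h4 : cden α (ν + 2) = cden β (μ + d)) :
    xi α ν = xi β μ ∧ xi α (ν + 1) = xi β (μ + d - 1) ∧
    cden α (ν + 1) = cden β (μ + 1) ∧ d = 2 ∧
    revq α (ν + 2) = revq β (μ + 2) ∧ cden α (ν + 2) = cden β (μ + 2) := by
  -- basic positivity facts used throughout
  have hQ0r : (1:ℝ) ≤ (cden α ν : ℝ) := by exact_mod_cast CFaux.cden_pos α hα ν
  have hQ1r : (1:ℝ) ≤ (cden α (ν+1) : ℝ) := by exact_mod_cast CFaux.cden_pos α hα (ν+1)
  have hR0r : (1:ℝ) ≤ (cden β μ : ℝ) := by exact_mod_cast CFaux.cden_pos β hβ μ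
  have hR1r : (1:ℝ) ≤ (cden β (μ+1) : ℝ) := by exact_mod_cast CFaux.cden_pos β hβ (μ+1)
  have hIa := CFaux.xi_identity α hα ν
  have hIb := CFaux.xi_identity β hβ μ
  have hX1pos : 0 < xi α (ν+1) := CFaux.xi_pos α hα (ν+1)
  have hX1lt : xi α (ν+1) < xi α ν := CFaux.xi_lt α hα ν
  have hY1pos : 0 < xi β (μ+1) := CFaux.xi_pos β hβ (μ+1)
  have ha2 : 1 ≤ pq α (ν+2) := CFaux.pq_pos α hα (ν+1)
  have ha2r : (1:ℝ) ≤ (pq α (ν+2) : ℝ) := by exact_mod_cast ha2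
  have hQrec : cden α (ν+2) = pq α (ν+2) * cden α (ν+1) + cden α ν := rfl
  rcases Nat.lt_or_ge d 2 with hdlt | hd2
  · -- case d = 1 : contradiction
    exfalso
    have hd1 : d = 1 := by omega
    subst hd1
    have h4r : ((cden α (ν+2) : ℤ) : ℝ) = ((cden β (μ+1) : ℤ) : ℝ) := by exact_mod_cast h4
    have hQ2r : ((cden α (ν+2) : ℤ) : ℝ)
        = (pq α (ν+2) : ℝ) * (cden α (ν+1) : ℝ) + (cden α ν : ℝ) := by
      exact_mod_cast congrArg (fun z : ℤ => (z : ℝ)) hQrec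
    have t1 : xi α (ν+1) * (cden α ν : ℝ) < xi α ν * (cden α ν : ℝ) := by
      apply mul_lt_mul_of_pos_right hX1lt (by linarith)
    have hX0pos : 0 < xi α ν := lt_trans hX1pos hX1lt
    have t2 : xi α ν * (cden α (ν+1) : ℝ) ≤ xi α ν * ((pq α (ν+2) : ℝ) * (cden α (ν+1) : ℝ)) := by
      nlinarith [mul_nonneg (mul_nonneg (le_of_lt hX0pos) (by linarith : (0:ℝ) ≤ (cden α (ν+1) : ℝ)))
        (by linarith : (0:ℝ) ≤ (pq α (ν+2) : ℝ) - 1)]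
    have t3 : xi α ν * (cden β (μ+1) : ℝ) ≤ xi β μ * (cden β (μ+1) : ℝ) := by
      apply mul_le_mul_of_nonneg_right h1 (by linarith)
    nlinarith [hY1pos, hR0r, hIa, hIb]
  · -- main case : d ≥ 2
    -- continuant chains
    have hA := CFaux.chainA β μ d hβ hd2
    have hAd1 := (hA (d-1) le_rfl).1
    have hAd2 := (hA (d-1) le_rfl).2
    have i1 : μ + (d-1-(d-1)) = μ := by omega
    have i2 : μ + (d - (d-1)) = μ + 1 := by omega
    rw [i1] at hAd1
    rw [i2] at hAd2
    have hB := CFaux.chainB β μ d hβ hd2 (d-1) le_rfl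
    have i3 : μ + (d - (d-1) - 1) = μ := by omega
    rw [i2, i3] at hB
    obtain ⟨huE', huE⟩ := CFaux.chainU β μ d hβ hd2 (d-1) le_rfl
    obtain ⟨hvV0', hvV1, _⟩ := CFaux.chainV β μ d hβ hd2 (d-1) le_rfl
    have huE1 : 1 ≤ (CFaux.rec2 (fun m => pq β (μ + d - m)) (0,1) (d-1)).1 := by
      have hsp : d - 1 = (d-2) + 1 := by omega
      rw [hsp, CFaux.rec2_succ_1]
      exact (CFaux.chainU β μ d hβ hd2 (d-2) (by omega)).2
    -- abbreviations (ℤ)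
    -- E := (CFaux.rec2 c01 (d-1)).2 ; E' := (CFaux.rec2 c01 (d-1)).1
    -- V1 := (CFaux.rec2 c10 (d-1)).2 ; V0' := (CFaux.rec2 c10 (d-1)).1
    -- integer equation
    have heq : pq α (ν+2) * cden α (ν+1) + cden α ν
        = (CFaux.rec2 (fun m => pq β (μ + d - m)) ( 0,1) (d-1)).2 * cden β (μ+1)
          + (CFaux.rec2 (fun m => pq β (μ + d - m)) (0,1) (d-1)).1 * cden β μ := by
      rw [← hQrec, h4, hB]
    have hQ01 : cden α ν ≤ cden α (ν+1) := CFaux.cden_le_succ α hα ν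
    have hQ0 : 1 ≤ cden α ν := CFaux.cden_pos α hα ν
    have hQ1 : 1 ≤ cden α (ν+1) := CFaux.cden_pos α hα (ν+1)
    have hR0 : 1 ≤ cden β μ := CFaux.cden_pos β hβ μ
    have hEa : (CFaux.rec2 (fun m => pq β (μ + d - m)) (0,1) (d-1)).2 ≤ pq α (ν+2) := by
      by_contra hcon
      push_neg at hcon
      nlinarith [heq, hQ01, hQ0, hQ1, hR0, h3, huE1, ha2,
        mul_le_mul (by omega : pq α (ν+2) + 1 ≤ (CFaux.rec2 (fun m => pq β (μ + d - m)) (0,1) (d-1)).2)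
          h3 (by omega) (by omega : (0:ℤ) ≤ (CFaux.rec2 (fun m => pq β (μ + d - m)) (0,1) (d-1)).2),
        mul_le_mul huE1 hR0 (by omega) (by omega : (0:ℤ) ≤ (CFaux.rec2 (fun m => pq β (μ + d - m)) (0,1) (d-1)).1)]

    -- names for the four continuant coefficients
    set Ec := (CFaux.rec2 (fun m => pq β (μ + d - m)) (0,1) (d-1)).2 with hEcdef
    set Ep := (CFaux.rec2 (fun m => pq β (μ + d - m)) (0,1) (d-1)).1 with hEpdef
    set Vc := (CFaux.rec2 (fun m => pq β (μ + d - m)) (1,0) (d-1)).2 with hVcdef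
    set Vp := (CFaux.rec2 (fun m => pq β (μ + d - m)) (1,0) (d-1)).1 with hVpdef
    have hkZ : (0:ℤ) ≤ cden β (μ+1) - cden α (ν+1) := by omega
    have hWQ : (cden β (μ+1) - cden α (ν+1)) * Ec + cden β μ * Ep - cden α ν
        = (pq α (ν+2) - Ec) * cden α (ν+1) := by linear_combination (-1 : ℤ) * heq
    -- real-side facts
    have hIbd := CFaux.xi_identity β hβ (μ + (d-1))
    have i4 : μ + (d-1) + 1 = μ + d := by omega
    rw [i4] at hIbd
    have h2' : xi α (ν+1) ≤ xi β (μ + (d-1)) := by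
      have e : μ + d - 1 = μ + (d-1) := by omega
      rwa [e] at h2
    have hYd1pos : 0 < xi β (μ+(d-1)) := CFaux.xi_pos β hβ _
    have hYdpos : 0 < xi β (μ+d) := CFaux.xi_pos β hβ _
    have hY0pos : 0 < xi β μ := CFaux.xi_pos β hβ μ
    have hRd1r : (1:ℝ) ≤ (cden β (μ+(d-1)) : ℝ) := by
      exact_mod_cast CFaux.cden_pos β hβ (μ+(d-1))
    have hQ02 : cden α ν ≤ cden α (ν+2) := CFaux.cden_mono α hα (by omega)
    have hQ0Rd : ((cden α ν : ℤ):ℝ) ≤ ((cden β (μ+d) : ℤ):ℝ) := by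
      rw [← h4]; exact_mod_cast hQ02
    have ht : (cden α ν : ℝ) * xi β (μ+(d-1)) < 1 := by
      have w1 : 0 ≤ ((cden β (μ+d):ℝ) - (cden α ν : ℝ)) * xi β (μ+(d-1)) :=
        mul_nonneg (by linarith) (le_of_lt hYd1pos)
      have w2 : xi β (μ+d) * 1 ≤ xi β (μ+d) * (cden β (μ+(d-1)) : ℝ) :=
        mul_le_mul_of_nonneg_left hRd1r (le_of_lt hYdpos)
      linarith [hIbd, hYdpos, w1, w2]
    have hQ1cast : ((cden α (ν+1):ℤ):ℝ) ≤ ((cden β (μ+1):ℤ):ℝ) := by exact_mod_cast h3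
    have hprod1 : xi α ν * (cden α (ν+1):ℝ) ≤ xi β μ * (cden α (ν+1):ℝ) :=
      mul_le_mul_of_nonneg_right h1 (by linarith)
    have hP1 : ((cden β (μ+1):ℝ) - (cden α (ν+1):ℝ)) * xi β μ + (cden β μ:ℝ) * xi β (μ+1)
        ≤ xi α (ν+1) * (cden α ν:ℝ) := by nlinarith [hIa, hIb, hprod1]
    have hQ0nn : (0:ℝ) ≤ (cden α ν : ℝ) := by linarith
    have htnn : (0:ℝ) ≤ 1 - (cden α ν:ℝ) * xi β (μ+(d-1)) := by linarith [ht]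
    have hX1Q0nn : (0:ℝ) ≤ xi α (ν+1) * (cden α ν:ℝ) :=
      le_of_lt (mul_pos hX1pos (by linarith))
    have s1 : (((cden β (μ+1):ℝ) - (cden α (ν+1):ℝ)) * xi β μ + (cden β μ:ℝ) * xi β (μ+1))
          * (1 - (cden α ν:ℝ) * xi β (μ+(d-1)))
        ≤ (xi α (ν+1) * (cden α ν:ℝ)) * (1 - (cden α ν:ℝ) * xi β (μ+(d-1))) :=
      mul_le_mul_of_nonneg_right hP1 htnn
    have s2 : (xi α (ν+1) * (cden α ν:ℝ)) * (1 - (cden α ν:ℝ) * xi β (μ+(d-1)))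
        ≤ (xi α (ν+1) * (cden α ν:ℝ)) * (1 - (cden α ν:ℝ) * xi α (ν+1)) := by
      apply mul_le_mul_of_nonneg_left _ hX1Q0nn
      nlinarith [mul_le_mul_of_nonneg_left h2' hQ0nn]
    have s3 : (xi α (ν+1) * (cden α ν:ℝ)) * (1 - (cden α ν:ℝ) * xi α (ν+1))
        = (xi α (ν+1) * (cden α ν:ℝ)) * (xi α ν * (cden α (ν+1):ℝ)) := by
      have e : 1 - (cden α ν:ℝ) * xi α (ν+1) = xi α ν * (cden α (ν+1):ℝ) := by linarith [hIa]
      rw [e]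
    have s4 : (xi α (ν+1) * (cden α ν:ℝ)) * (xi α ν * (cden α (ν+1):ℝ))
        ≤ (xi α (ν+1) * (cden α ν:ℝ)) * (xi β μ * (cden α (ν+1):ℝ)) :=
      mul_le_mul_of_nonneg_left hprod1 hX1Q0nn
    have s5 : (xi α (ν+1) * (cden α ν:ℝ)) * (xi β μ * (cden α (ν+1):ℝ))
        ≤ (xi β (μ+(d-1)) * (cden α ν:ℝ)) * (xi β μ * (cden α (ν+1):ℝ)) := by
      apply mul_le_mul_of_nonneg_right (mul_le_mul_of_nonneg_right h2' hQ0nn)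
      exact le_of_lt (mul_pos hY0pos (by linarith))
    have hQ1Y0 : (cden α (ν+1):ℝ) * xi β μ
        = 1 - (((cden β (μ+1):ℝ) - (cden α (ν+1):ℝ)) * xi β μ + (cden β μ:ℝ) * xi β (μ+1)) := by
      linarith [hIb]
    have hend : (xi β (μ+(d-1)) * (cden α ν:ℝ)) * (xi β μ * (cden α (ν+1):ℝ))
        = ((cden α ν:ℝ) * xi β (μ+(d-1)))
          * (1 - (((cden β (μ+1):ℝ) - (cden α (ν+1):ℝ)) * xi β μ + (cden β μ:ℝ) * xi β (μ+1))) := by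
      linear_combination ((cden α ν:ℝ) * xi β (μ+(d-1))) * hQ1Y0
    have hM : ((cden β (μ+1):ℝ) - (cden α (ν+1):ℝ)) * xi β μ + (cden β μ:ℝ) * xi β (μ+1)
        ≤ (cden α ν:ℝ) * xi β (μ+(d-1)) := by linarith [s1, s2, s3, s4, s5, hend]
    have hS : ((cden β (μ+1):ℝ) - (cden α (ν+1):ℝ)) * xi β μ + (cden β μ:ℝ) * xi β (μ+1)
        = (((cden β (μ+1) - cden α (ν+1)) * Ec + cden β μ * Ep : ℤ) : ℝ) * xi β (μ+(d-1))
          + (((cden β (μ+1) - cden α (ν+1)) * Vc + cden β μ * Vp : ℤ) : ℝ) * xi β (μ+d) := by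
      rw [hAd1, hAd2]; push_cast; ring
    have hWQr : (((cden β (μ+1) - cden α (ν+1)) * Ec + cden β μ * Ep : ℤ) : ℝ)
        = (cden α ν : ℝ) + (((pq α (ν+2) - Ec) * cden α (ν+1) : ℤ) : ℝ) := by
      have : (cden β (μ+1) - cden α (ν+1)) * Ec + cden β μ * Ep
          = cden α ν + (pq α (ν+2) - Ec) * cden α (ν+1) := by linarith [hWQ]
      exact_mod_cast congrArg (fun z : ℤ => (z:ℝ)) this
    have hterm : (((pq α (ν+2) - Ec) * cden α (ν+1) : ℤ):ℝ) * xi β (μ+(d-1))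
        + (((cden β (μ+1) - cden α (ν+1)) * Vc + cden β μ * Vp : ℤ) : ℝ) * xi β (μ+d) ≤ 0 := by
      nlinarith [hM, hS, hWQr]
    have hterm1nn : (0:ℝ) ≤ (((pq α (ν+2) - Ec) * cden α (ν+1) : ℤ):ℝ) * xi β (μ+(d-1)) := by
      apply mul_nonneg _ (le_of_lt hYd1pos)
      exact_mod_cast mul_nonneg (by omega : (0:ℤ) ≤ pq α (ν+2) - Ec) (by omega : (0:ℤ) ≤ cden α (ν+1))
    have hZnn : (0:ℤ) ≤ (cden β (μ+1) - cden α (ν+1)) * Vc + cden β μ * Vp :=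
      add_nonneg (mul_nonneg hkZ hvV1) (mul_nonneg (by omega) hvV0')
    have hterm2nn : (0:ℝ) ≤ (((cden β (μ+1) - cden α (ν+1)) * Vc + cden β μ * Vp : ℤ) : ℝ) * xi β (μ+d) := by
      apply mul_nonneg _ (le_of_lt hYdpos)
      exact_mod_cast hZnn
    have hz2 : (((cden β (μ+1) - cden α (ν+1)) * Vc + cden β μ * Vp : ℤ) : ℝ) * xi β (μ+d) = 0 :=
      le_antisymm (by linarith) hterm2nn
    have hZ0 : (cden β (μ+1) - cden α (ν+1)) * Vc + cden β μ * Vp = 0 := by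
      rcases mul_eq_zero.mp hz2 with h | h
      · exact_mod_cast h
      · exact absurd h (ne_of_gt hYdpos)
    have hz1 : (((pq α (ν+2) - Ec) * cden α (ν+1) : ℤ):ℝ) * xi β (μ+(d-1)) = 0 :=
      le_antisymm (by linarith) hterm1nn
    have hA2E : (pq α (ν+2) - Ec) * cden α (ν+1) = 0 := by
      rcases mul_eq_zero.mp hz1 with h | h
      · exact_mod_cast h
      · exact absurd h (ne_of_gt hYd1pos)
    have ha2Ec : pq α (ν+2) = Ec := by
      rcases mul_eq_zero.mp hA2E with h | h
      · omega
      · omega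
    have hkVa : (0:ℤ) ≤ (cden β (μ+1) - cden α (ν+1)) * Vc := mul_nonneg hkZ hvV1
    have hkVb : (0:ℤ) ≤ cden β μ * Vp := mul_nonneg (by linarith [hR0]) hvV0'
    have hkV1 : (cden β (μ+1) - cden α (ν+1)) * Vc = 0 := by linarith [hZ0]
    have hkV2 : cden β μ * Vp = 0 := by linarith [hZ0]
    have hVp0 : Vp = 0 := by
      rcases mul_eq_zero.mp hkV2 with h | h
      · omega
      · exact h
    -- d = 2
    have hd2e : d = 2 := by
      by_contra hne
      have h3d : 3 ≤ d := by omega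
      have h1d2 : 1 ≤ (CFaux.rec2 (fun m => pq β (μ + d - m)) (1,0) (d-1)).1 := by
        have hsp : d - 1 = (d-2) + 1 := by omega
        rw [hsp, CFaux.rec2_succ_1]
        exact ((CFaux.chainV β μ d hβ hd2 (d-2) (by omega)).2.2 (by omega))
      rw [← hVpdef] at h1d2
      omega
    subst hd2e
    have h21 : (2:ℕ) - 1 = 1 := rfl
    have hVc1 : Vc = 1 := by
      rw [hVcdef, h21, CFaux.rec2_one]
      ring
    have hEp1 : Ep = 1 := by
      rw [hEpdef, h21, CFaux.rec2_one]
    have hkZ0 : cden β (μ+1) - cden α (ν+1) = 0 := by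
      have := hkV1
      rw [hVc1] at this
      omega
    have hQ0R0 : cden α ν = cden β μ := by
      have := hWQ
      rw [ha2Ec, hEp1, hkZ0] at this
      omega
    -- extract the two xi equalities
    have hco1 : (cden β (μ+1) - cden α (ν+1)) * Ec + cden β μ * Ep = cden α ν := by
      rw [hEp1, hkZ0]
      omega
    have hSval : ((cden β (μ+1):ℝ) - (cden α (ν+1):ℝ)) * xi β μ + (cden β μ:ℝ) * xi β (μ+1)
        = (cden α ν:ℝ) * xi β (μ+(2-1)) := by
      rw [hS, hco1, hZ0]
      push_cast
      ring
    have hA1A6 : (((cden β (μ+1):ℝ) - (cden α (ν+1):ℝ)) * xi β μ + (cden β μ:ℝ) * xi β (μ+1))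
          * (1 - (cden α ν:ℝ) * xi β (μ+(2-1)))
        = (xi β (μ+(2-1)) * (cden α ν:ℝ)) * (xi β μ * (cden α (ν+1):ℝ)) := by
      rw [hend, ← hSval]
    have e45 : (xi α (ν+1) * (cden α ν:ℝ)) * (xi α ν * (cden α (ν+1):ℝ))
        = (xi α (ν+1) * (cden α ν:ℝ)) * (xi β μ * (cden α (ν+1):ℝ)) :=
      le_antisymm s4 (by linarith [s1, s2, s3, s5, hA1A6])
    have e56 : (xi α (ν+1) * (cden α ν:ℝ)) * (xi β μ * (cden α (ν+1):ℝ))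
        = (xi β (μ+(2-1)) * (cden α ν:ℝ)) * (xi β μ * (cden α (ν+1):ℝ)) :=
      le_antisymm s5 (by linarith [s1, s2, s3, s4, hA1A6])
    have hposf : (0:ℝ) < xi α (ν+1) * (cden α ν:ℝ) * (cden α (ν+1):ℝ) :=
      mul_pos (mul_pos hX1pos (by linarith)) (by linarith)
    have hXY0 : xi α ν = xi β μ := by
      have h' : (xi α (ν+1) * (cden α ν:ℝ) * (cden α (ν+1):ℝ)) * xi α ν
          = (xi α (ν+1) * (cden α ν:ℝ) * (cden α (ν+1):ℝ)) * xi β μ := by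
        linear_combination e45
      exact mul_left_cancel₀ (ne_of_gt hposf) h'
    have hposg : (0:ℝ) < (cden α ν:ℝ) * xi β μ * (cden α (ν+1):ℝ) :=
      mul_pos (mul_pos (by linarith) hY0pos) (by linarith)
    have hX1Yd1 : xi α (ν+1) = xi β (μ+(2-1)) := by
      have h' : ((cden α ν:ℝ) * xi β μ * (cden α (ν+1):ℝ)) * xi α (ν+1)
          = ((cden α ν:ℝ) * xi β μ * (cden α (ν+1):ℝ)) * xi β (μ+(2-1)) := by
        linear_combination e56
      exact mul_left_cancel₀ (ne_of_gt hposg) h'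
    have hq12 : cden α (ν+1) = cden β (μ+1) := by omega
    refine ⟨hXY0, ?_, hq12, rfl, ?_, h4⟩
    · have e : μ + 2 - 1 = μ + (2-1) := by omega
      rw [e]
      exact hX1Yd1
    · rw [CFaux.revq_eq α hα (ν+1), CFaux.revq_eq β hβ (μ+1), hq12, h4]
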